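/- Appending the string x_1 x_1 x_1 x_2 x_2 x_2 ... x_n x_n x_n to a cyclic string whose first character is x_1 and last character is x_n contributes exactly the following new cyclic 3-windows: {x_i, x_i, x_i} for each i, and {x_i, x_i, x_{i+1}} and {x_i, x_{i+1}, x_{i+1}} for each i (indices mod n, so including the pairs involving x_n and x_1). -/

import Mathlib

/-- The cyclic `t`-window of the string `w` starting at position `i`, as a multiset. -/
def cycWindow (w : List ℕ) (t i : ℕ) : Multiset ℕ :=
  ((List.range t).map (fun j => w.getD ((i + j) % w.length) 0) : List ℕ)

/-- The list of all cyclic `t`-windows of the string `w`. -/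
def cycWindows (w : List ℕ) (t : ℕ) : List (Multiset ℕ) :=
  (List.range w.length).map (cycWindow w t)

/-- The list of all (non-cyclic) `t`-windows of the linear string `w`. -/
def linWindows (w : List ℕ) (t : ℕ) : List (Multiset ℕ) :=
  (List.range (w.length + 1 - t)).map
    (fun i => ((List.range t).map (fun j => w.getD (i + j) 0) : List ℕ))

/-- `w` is a universal cycle on `t`-multisets over `[n] = {1,…,n}`. -/
def IsUcycle (n t : ℕ) (w : List ℕ) : Prop :=
  w ≠ [] ∧ (∀ x ∈ w, x ∈ Finset.Icc 1 n) ∧ (cycWindows w t).Nodup ∧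
  ∀ m : Multiset ℕ, m ∈ cycWindows w t ↔
    (Multiset.card m = t ∧ ∀ x ∈ m, x ∈ Finset.Icc 1 n)

/-- `w` is a universal cycle on `t`-subsets of `[n] = {1,…,n}`. -/
def IsUcycleSet (n t : ℕ) (w : List ℕ) : Prop :=
  w ≠ [] ∧ (∀ x ∈ w, x ∈ Finset.Icc 1 n) ∧ (cycWindows w t).Nodup ∧
  ∀ m : Multiset ℕ, m ∈ cycWindows w t ↔
    (m.Nodup ∧ Multiset.card m = t ∧ ∀ x ∈ m, x ∈ Finset.Icc 1 n)

/-- The unordered pair `{x,y}` appears as (cyclically) consecutive characters of `w`. -/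
def ConsecPair (w : List ℕ) (x y : ℕ) : Prop :=
  ∃ i < w.length, ({w.getD i 0, w.getD ((i + 1) % w.length) 0} : Multiset ℕ) = {x, y}

/- auxiliary lemmas -/

lemma aux_getD_last (l : List ℕ) (h : l ≠ []) : l.getD (l.length - 1) 0 = l.getLastD 0 := by
  rw [List.getLastD_eq_getLast?, List.getLast?_eq_getLast h, Option.getD_some,
    List.getLast_eq_getElem, List.getD_eq_getElem l 0 (by have := List.length_pos_iff.mpr h; omega)]

lemma aux_getD_head (l : List ℕ) (h : l ≠ []) : l.getD 0 0 = l.headI := by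
  cases l with
  | nil => simp at h
  | cons a t => rfl

lemma aux_triple_len (xs : List ℕ) : (xs.flatMap (fun a => [a,a,a])).length = 3 * xs.length := by
  induction xs with
  | nil => simp
  | cons a t ih => simp [ih]; ring

lemma aux_triple_getD (xs : List ℕ) (i r : ℕ) (hi : i < xs.length) (hr : r < 3) :
    (xs.flatMap (fun a => [a,a,a])).getD (3*i + r) 0 = xs.getD i 0 := by
  induction xs generalizing i with
  | nil => simp at hi
  | cons a t ih =>
    cases i with
    | zero => interval_cases r <;> rfl
    | succ i =>
      have h3 : 3*(i+1)+r = (3*i+r) + 3 := by ring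
      have hc : (List.cons a t).flatMap (fun a => [a,a,a]) = a::a::a::(t.flatMap (fun a => [a,a,a])) := rfl
      rw [h3, hc]
      show (t.flatMap fun a => [a,a,a]).getD (3*i+r) 0 = _
      exact ih i (by simpa using hi)

lemma aux_bind_append {α β : Type} (l₁ l₂ : List α) (f : α → List β) :
    (l₁ ++ l₂).flatMap f = l₁.flatMap f ++ l₂.flatMap f := by
  induction l₁ with
  | nil => rfl
  | cons a t ih => simp only [List.cons_append, List.flatMap_cons, ih, List.append_assoc]

lemma aux_cw3 (w : List ℕ) (i : ℕ) : cycWindow w 3 i =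
    (↑[w.getD (i % w.length) 0, w.getD ((i+1) % w.length) 0, w.getD ((i+2) % w.length) 0] :
      Multiset ℕ) := rfl

theorem append_block_windows (n : ℕ) (xs Y : List ℕ)
    (hxslen : xs.length = n) (hxs : xs.Nodup) (hxsne : xs ≠ [])
    (hxsmem : ∀ x ∈ xs, x ∈ Finset.Icc 1 n)
    (hYlen : 3 ≤ Y.length)
    (hfirst : Y.headI = xs.headI) (hlast : Y.getLastD 0 = xs.getLastD 0) :
    (cycWindows (Y ++ xs.flatMap (fun a => [a, a, a])) 3 : Multiset (Multiset ℕ)) =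
      (cycWindows Y 3 : Multiset (Multiset ℕ)) +
      ((List.range n).flatMap (fun i =>
        [({xs.getD i 0, xs.getD i 0, xs.getD i 0} : Multiset ℕ),
         ({xs.getD i 0, xs.getD i 0, xs.getD ((i + 1) % n) 0} : Multiset ℕ),
         ({xs.getD i 0, xs.getD ((i + 1) % n) 0, xs.getD ((i + 1) % n) 0} : Multiset ℕ)])
        : Multiset (Multiset ℕ)) := by
  have hn : 0 < n := hxslen ▸ List.length_pos_iff.mpr hxsne
  obtain ⟨n', rfl⟩ : ∃ n', n = n' + 1 := ⟨n - 1, by omega⟩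
  set B := xs.flatMap (fun a => [a, a, a]) with hBdef
  set m := Y.length with hmdef
  have hm3 : 3 ≤ m := hYlen
  have hBlen : B.length = 3*n' + 3 := by
    rw [hBdef, aux_triple_len, hxslen]; ring
  have hWlen : (Y ++ B).length = m + (3*n' + 3) := by
    rw [List.length_append, hBlen]
  -- getD facts
  have hYne : Y ≠ [] := by
    have h0 : 0 < m := by omega
    exact List.length_pos_iff.mp (hmdef ▸ h0)
  have hgetW : ∀ j < m, (Y ++ B).getD j 0 = Y.getD j 0 := fun j hj =>
    List.getD_append Y B 0 j hj
  have hgetWB : ∀ k, (Y ++ B).getD (m + k) 0 = B.getD k 0 := by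
    intro k
    rw [List.getD_append_right Y B 0 (m + k) (by omega)]
    congr 1
    omega
  have hgetB : ∀ j r, j < n' + 1 → r < 3 → B.getD (3*j + r) 0 = xs.getD j 0 := by
    intro j r hj hr
    exact aux_triple_getD xs j r (by omega) hr
  have hx0 : Y.getD 0 0 = xs.getD 0 0 := by
    rw [aux_getD_head Y hYne, aux_getD_head xs hxsne, hfirst]
  have hxm : Y.getD (m - 1) 0 = xs.getD n' 0 := by
    rw [aux_getD_last Y hYne, hlast, ← aux_getD_last xs hxsne, hxslen]
    simp
  -- abbreviations
  set cwW := cycWindow (Y ++ B) 3 with hcwW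
  set cwY := cycWindow Y 3 with hcwY
  set t1 : ℕ → Multiset ℕ := fun i => ({xs.getD i 0, xs.getD i 0, xs.getD i 0} : Multiset ℕ)
    with ht1
  set t2 : ℕ → Multiset ℕ :=
    fun i => ({xs.getD i 0, xs.getD i 0, xs.getD ((i + 1) % (n'+1)) 0} : Multiset ℕ) with ht2
  set t3 : ℕ → Multiset ℕ :=
    fun i => ({xs.getD i 0, xs.getD ((i + 1) % (n'+1)) 0, xs.getD ((i + 1) % (n'+1)) 0} :
      Multiset ℕ) with ht3
  -- window computations
  have hkey : ∀ i < m - 1, cwW i = cwY i := by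
    intro i hi
    rw [hcwW, hcwY, aux_cw3, aux_cw3, hWlen, ← hmdef]
    rw [Nat.mod_eq_of_lt (show i < m + (3*n'+3) by omega),
        Nat.mod_eq_of_lt (show i+1 < m + (3*n'+3) by omega),
        Nat.mod_eq_of_lt (show i+2 < m + (3*n'+3) by omega),
        Nat.mod_eq_of_lt (show i < m by omega),
        Nat.mod_eq_of_lt (show i+1 < m by omega),
        hgetW i (by omega), hgetW (i+1) (by omega)]
    rcases lt_or_eq_of_le (show i + 2 ≤ m by omega) with h2 | h2
    · rw [Nat.mod_eq_of_lt h2, hgetW (i+2) h2]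
    · have hm0 : (Y ++ B).getD m 0 = xs.getD 0 0 := by
        have h1 : (Y ++ B).getD m 0 = B.getD 0 0 := by simpa using hgetWB 0
        have h2' : B.getD 0 0 = xs.getD 0 0 := by simpa using hgetB 0 0 (by omega) (by omega)
        rw [h1, h2']
      rw [h2, Nat.mod_self, hx0, hm0]
  have hwA : cwW (m - 1) = t3 n' := by
    have b0 : B.getD 0 0 = xs.getD 0 0 := by simpa using hgetB 0 0 (by omega) (by omega)
    have b1 : B.getD 1 0 = xs.getD 0 0 := by simpa using hgetB 0 1 (by omega) (by omega)
    rw [hcwW, aux_cw3, hWlen]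
    rw [show m - 1 + 1 = m + 0 from by omega, show m - 1 + 2 = m + 1 from by omega,
        Nat.mod_eq_of_lt (show m - 1 < m + (3*n'+3) by omega),
        Nat.mod_eq_of_lt (show m + 0 < m + (3*n'+3) by omega),
        Nat.mod_eq_of_lt (show m + 1 < m + (3*n'+3) by omega),
        hgetW (m-1) (by omega), hxm, hgetWB 0, hgetWB 1, b0, b1]
    simp only [ht3, Nat.mod_self]
    rfl
  have hw1 : ∀ j < n' + 1, cwW (m + 3*j) = t1 j := by
    intro j hj
    rw [hcwW, aux_cw3, hWlen, ht1]
    rw [show m + 3*j + 1 = m + (3*j+1) from by omega,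
        show m + 3*j + 2 = m + (3*j+2) from by omega,
        Nat.mod_eq_of_lt (show m + 3*j < m + (3*n'+3) by omega),
        Nat.mod_eq_of_lt (show m + (3*j+1) < m + (3*n'+3) by omega),
        Nat.mod_eq_of_lt (show m + (3*j+2) < m + (3*n'+3) by omega),
        hgetWB (3*j), hgetWB (3*j+1), hgetWB (3*j+2),
        show (3*j : ℕ) = 3*j + 0 from by omega,
        hgetB j 0 hj (by omega), hgetB j 1 hj (by omega), hgetB j 2 hj (by omega)]
    rfl
  have hw2 : ∀ j < n', cwW (m + (3*j+1)) = t2 j := by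
    intro j hj
    rw [hcwW, aux_cw3, hWlen]
    rw [show m + (3*j+1) + 1 = m + (3*j+2) from by omega,
        show m + (3*j+1) + 2 = m + (3*(j+1)+0) from by omega,
        Nat.mod_eq_of_lt (show m + (3*j+1) < m + (3*n'+3) by omega),
        Nat.mod_eq_of_lt (show m + (3*j+2) < m + (3*n'+3) by omega),
        Nat.mod_eq_of_lt (show m + (3*(j+1)+0) < m + (3*n'+3) by omega),
        hgetWB (3*j+1), hgetWB (3*j+2), hgetWB (3*(j+1)+0),
        hgetB j 1 (by omega) (by omega), hgetB j 2 (by omega) (by omega),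
        hgetB (j+1) 0 (by omega) (by omega)]
    simp only [ht2, Nat.mod_eq_of_lt (show j + 1 < n' + 1 by omega)]
    rfl
  have hw3 : ∀ j < n', cwW (m + (3*j+2)) = t3 j := by
    intro j hj
    rw [hcwW, aux_cw3, hWlen]
    rw [show m + (3*j+2) + 1 = m + (3*(j+1)+0) from by omega,
        show m + (3*j+2) + 2 = m + (3*(j+1)+1) from by omega,
        Nat.mod_eq_of_lt (show m + (3*j+2) < m + (3*n'+3) by omega),
        Nat.mod_eq_of_lt (show m + (3*(j+1)+0) < m + (3*n'+3) by omega),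
        Nat.mod_eq_of_lt (show m + (3*(j+1)+1) < m + (3*n'+3) by omega),
        hgetWB (3*j+2), hgetWB (3*(j+1)+0), hgetWB (3*(j+1)+1),
        hgetB j 2 (by omega) (by omega),
        hgetB (j+1) 0 (by omega) (by omega), hgetB (j+1) 1 (by omega) (by omega)]
    simp only [ht3, Nat.mod_eq_of_lt (show j + 1 < n' + 1 by omega)]
    rfl
  have hwB : cwW (m + (3*n'+1)) = t2 n' := by
    rw [hcwW, aux_cw3, hWlen]
    rw [show m + (3*n'+1) + 1 = m + (3*n'+2) from by omega,
        show m + (3*n'+1) + 2 = m + (3*n'+3) from by omega,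
        Nat.mod_eq_of_lt (show m + (3*n'+1) < m + (3*n'+3) by omega),
        Nat.mod_eq_of_lt (show m + (3*n'+2) < m + (3*n'+3) by omega),
        Nat.mod_self,
        hgetWB (3*n'+1), hgetWB (3*n'+2),
        hgetB n' 1 (by omega) (by omega), hgetB n' 2 (by omega) (by omega),
        hgetW 0 (by omega), hx0]
    simp only [ht2, Nat.mod_self]
    rfl
  have hwC : cwW (m + (3*n'+2)) = cwY (m - 1) := by
    rw [hcwW, hcwY, aux_cw3, aux_cw3, hWlen, ← hmdef]
    rw [show m + (3*n'+2) + 1 = m + (3*n'+3) from by omega,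
        show m + (3*n'+2) + 2 = (m + (3*n'+3)) + 1 from by omega,
        Nat.mod_eq_of_lt (show m + (3*n'+2) < m + (3*n'+3) by omega),
        Nat.mod_self, Nat.add_mod_left,
        Nat.mod_eq_of_lt (show 1 < m + (3*n'+3) by omega),
        hgetWB (3*n'+2), hgetB n' 2 (by omega) (by omega),
        hgetW 0 (by omega), hgetW 1 (by omega),
        Nat.mod_eq_of_lt (show m - 1 < m by omega),
        show m - 1 + 1 = m from by omega, Nat.mod_self,
        show m - 1 + 2 = m + 1 from by omega, Nat.add_mod_left,
        Nat.mod_eq_of_lt (show 1 < m by omega), hxm]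
  -- list decompositions
  have hsplitY : List.range m = List.range (m - 1) ++ [m - 1] := by
    conv_lhs => rw [show m = (m - 1) + 1 from by omega]
    exact List.range_succ (n := _)
  set f : ℕ → List (Multiset ℕ) := fun i => [t1 i, t2 i, t3 i] with hf
  have hblock : ∀ j ≤ n', (List.range (3*j)).map (fun k => cwW (m + k)) =
      (List.range j).flatMap f := by
    intro j hj
    induction j with
    | zero => rfl
    | succ j ih =>
      rw [show 3*(j+1) = (3*j+1+1) + 1 from by ring, List.range_succ, List.range_succ,
        show 3*j+1 = (3*j) + 1 from rfl, List.range_succ, List.range_succ (n := j)]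
      rw [List.map_append, List.map_append, List.map_append, aux_bind_append,
        ih (by omega)]
      simp only [List.map_cons, List.map_nil]
      rw [hw1 j (by omega), show (3*j) + 1 = 3*j+1 from rfl, hw2 j (by omega),
        show 3*j+1+1 = 3*j+2 from rfl, hw3 j (by omega), hf]
      simp
  have e1 : cycWindows (Y ++ B) 3 =
      (List.range (m - 1)).map cwY ++ [t3 n'] ++
      ((List.range n').flatMap f ++ [t1 n', t2 n', cwY (m - 1)]) := by
    show (List.range (Y ++ B).length).map cwW = _
    rw [hWlen, List.range_add, List.map_append, List.map_map]
    congr 1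
    · rw [hsplitY, List.map_append]
      congr 1
      · exact List.map_congr_left (fun i hi => hkey i (List.mem_range.mp hi))
      · simp [hwA]
    · rw [show 3*n'+3 = (3*n'+1+1) + 1 from by ring, List.range_succ, List.range_succ,
        show 3*n'+1 = (3*n') + 1 from rfl, List.range_succ]
      rw [List.map_append, List.map_append, List.map_append]
      have : List.map (cwW ∘ fun x => m + x) = List.map (fun k => cwW (m + k)) := rfl
      rw [this, hblock n' le_rfl]
      simp only [List.map_cons, List.map_nil, Function.comp]
      rw [hw1 n' (by omega), show (3*n') + 1 = 3*n'+1 from rfl, hwB,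
        show (3*n') + 1 + 1 = 3*n'+2 from by omega, hwC]
      simp
  have e2 : cycWindows Y 3 = (List.range (m - 1)).map cwY ++ [cwY (m - 1)] := by
    show (List.range Y.length).map cwY = _
    rw [← hmdef, hsplitY, List.map_append]
    rfl
  have e3 : (List.range (n'+1)).flatMap f = (List.range n').flatMap f ++ [t1 n', t2 n', t3 n'] := by
    rw [List.range_succ, aux_bind_append, hf]
    rfl
  rw [e1, e2]
  show _ = _ + ((List.range (n'+1)).flatMap f : Multiset (Multiset ℕ))
  rw [e3]
  simp only [← Multiset.coe_add, ← Multiset.cons_coe, Multiset.coe_nil,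
    ← Multiset.singleton_add]
  abel
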